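/- Let δ > 0 and let G be holomorphic on the open ball of radius δ in M_n(ℂ) with G(0) = 0 and derivative at 0 equal to the identity, and suppose Tr(G(x)·G(y)) = Tr(x·y) for all x, y with ‖x‖, ‖y‖ < δ/4. Then G(x) = x for all ‖x‖ < δ/4. -/

import Mathlib

open scoped Matrix.Norms.L2Operator

lemma trace_mul_stdBasis {n : ℕ} (A : Matrix (Fin n) (Fin n) ℂ) (i j : Fin n) :
    (A * Matrix.single j i (1 : ℂ)).trace = A i j := by
  rw [Matrix.trace]
  rw [Finset.sum_eq_single i]
  · simp [Matrix.diag]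
  · intro b _ hb
    simp [Matrix.diag, Matrix.mul_apply, Matrix.single, Ne.symm hb]
  · simp

theorem stmt_16 (n : ℕ) (δ : ℝ) (hδ : 0 < δ)
    (G : Matrix (Fin n) (Fin n) ℂ → Matrix (Fin n) (Fin n) ℂ)
    (hG : DifferentiableOn ℂ G (Metric.ball 0 δ))
    (h0 : G 0 = 0)
    (hD : fderiv ℂ G 0 = ContinuousLinearMap.id ℂ (Matrix (Fin n) (Fin n) ℂ))
    (htr : ∀ x y : Matrix (Fin n) (Fin n) ℂ, ‖x‖ < δ/4 → ‖y‖ < δ/4 →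
      (G x * G y).trace = (x * y).trace) :
    ∀ x : Matrix (Fin n) (Fin n) ℂ, ‖x‖ < δ/4 → G x = x := by
  intro x hx
  -- linear maps h ↦ Tr(G x * h) and h ↦ Tr(x * h)
  let M := Matrix (Fin n) (Fin n) ℂ
  let L : M → (M →L[ℂ] ℂ) := fun a =>
    LinearMap.toContinuousLinearMap
      ((Matrix.traceLinearMap (Fin n) ℂ ℂ).comp (LinearMap.mulLeft ℂ a))
  have hLapp : ∀ a m : M, L a m = (a * m).trace := fun a m => rfl
  -- G differentiable at 0
  have hG0 : DifferentiableAt ℂ G 0 := by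
    have := hG.differentiableAt (Metric.isOpen_ball.mem_nhds (Metric.mem_ball_self hδ))
    exact this
  -- f = fun y => (G x * G y).trace has derivative (L (G x)) ∘ fderiv G 0 = L (G x)
  have hf : HasFDerivAt (fun y => ((G x) * G y).trace)
      ((L (G x)).comp (fderiv ℂ G 0)) 0 :=
    (L (G x)).hasFDerivAt.comp 0 hG0.hasFDerivAt
  have hg : HasFDerivAt (fun y => (x * y).trace) (L x) 0 := (L x).hasFDerivAt
  have heq : (fun y => ((G x) * G y).trace) =ᶠ[nhds (0 : M)] (fun y => (x * y).trace) := by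
    filter_upwards [Metric.ball_mem_nhds (0 : M) (by linarith : (0:ℝ) < δ/4)] with y hy
    exact htr x y hx (by simpa using hy)
  have hderiv : ((L (G x)).comp (fderiv ℂ G 0)) = L x := by
    rw [← hf.fderiv, ← hg.fderiv]
    exact Filter.EventuallyEq.fderiv_eq heq
  rw [hD] at hderiv
  have key : ∀ m : M, ((G x) * m).trace = (x * m).trace := by
    intro m
    have := congrFun (congrArg (fun (f : M →L[ℂ] ℂ) => (f : M → ℂ)) hderiv) m
    simpa [hLapp] using this
  ext i j
  have := key (Matrix.single j i (1 : ℂ))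
  rwa [trace_mul_stdBasis, trace_mul_stdBasis] at this
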